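/- Let p⁻, p⁺ be real numbers with 2 < p⁻ ≤ p⁺ and let B₁ ≥ 1. Define G : (0, ∞) → ℝ by G(α) = α/(2B₁²) − (1/p⁻)·max{α^{p⁺/2}, α^{p⁻/2}}, and set α₁ = (B₁²)^{−2/(p⁻−2)}. Then G is strictly increasing on the interval (0, α₁] and strictly decreasing on the interval [α₁, ∞). -/

import Mathlib

open Set Real

lemma G_aux_hasDerivAt {b : ℝ} (c e : ℝ) {x : ℝ} (hx : 0 < x) :
    HasDerivAt (fun α : ℝ => α / (2 * b) - c * α ^ e)
      (1 / (2 * b) - c * (e * x ^ (e - 1))) x := by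
  have h1 : HasDerivAt (fun α : ℝ => α / (2 * b)) (1 / (2 * b)) x := by
    simpa using (hasDerivAt_id x).div_const (2 * b)
  have h2 : HasDerivAt (fun α : ℝ => α ^ e) (e * x ^ (e - 1)) x :=
    Real.hasDerivAt_rpow_const (Or.inl hx.ne')
  exact h1.sub (h2.const_mul c)

lemma G_aux_contOn {b : ℝ} (c e : ℝ) {s : Set ℝ} (hs : ∀ x ∈ s, 0 < x) :
    ContinuousOn (fun α : ℝ => α / (2 * b) - c * α ^ e) s := fun x hx =>
  ((G_aux_hasDerivAt c e (hs x hx)).continuousAt).continuousWithinAt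

lemma alpha1_pow {pm b : ℝ} (hpm : 2 < pm) (hb0 : 0 ≤ b) :
    (b ^ (-2 / (pm - 2))) ^ (pm / 2 - 1) = b⁻¹ := by
  have hne : pm - 2 ≠ 0 := by linarith
  rw [← Real.rpow_mul hb0]
  have : -2 / (pm - 2) * (pm / 2 - 1) = -1 := by field_simp
  rw [this, Real.rpow_neg_one]

/-- The function `G(α) = α/(2B₁²) − (1/p⁻)·max{α^{p⁺/2}, α^{p⁻/2}}` is strictly increasing
on `(0, α₁]` and strictly decreasing on `[α₁, ∞)`, where `α₁ = (B₁²)^{−2/(p⁻−2)}`. -/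
theorem G_monotonicity (pm pp B₁ α₁ : ℝ) (G : ℝ → ℝ)
    (hpm : 2 < pm) (hpmpp : pm ≤ pp) (hB₁ : 1 ≤ B₁)
    (hG : ∀ α, G α = α / (2 * B₁ ^ 2) - (1 / pm) * max (α ^ (pp / 2)) (α ^ (pm / 2)))
    (hα₁ : α₁ = (B₁ ^ 2) ^ (-2 / (pm - 2))) :
    StrictMonoOn G (Set.Ioc 0 α₁) ∧ StrictAntiOn G (Set.Ici α₁) := by
  set b : ℝ := B₁ ^ 2 with hbdef
  have hb : 1 ≤ b := one_le_pow₀ hB₁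
  have hb0 : (0:ℝ) < b := by linarith
  have hpm0 : (0:ℝ) < pm := by linarith
  have hα₁pos : 0 < α₁ := by rw [hα₁]; exact Real.rpow_pos_of_pos hb0 _
  have hα₁le1 : α₁ ≤ 1 := by
    rw [hα₁]
    exact Real.rpow_le_one_of_one_le_of_nonpos hb
      (div_nonpos_of_nonpos_of_nonneg (by norm_num) (by linarith))
  have hα₁pow : α₁ ^ (pm / 2 - 1) = b⁻¹ := by
    rw [hα₁]; exact alpha1_pow hpm hb0.le
  have hepos : 0 < pm / 2 - 1 := by linarith
  set f : ℝ → ℝ := fun α => α / (2 * b) - (1 / pm) * α ^ (pm / 2) with hf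
  set g : ℝ → ℝ := fun α => α / (2 * b) - (1 / pm) * α ^ (pp / 2) with hg
  -- G agrees with f on (0,1] and with g on [1,∞)
  have hGf : ∀ x, 0 < x → x ≤ 1 → G x = f x := by
    intro x hx hx1
    rw [hG, max_eq_right (Real.rpow_le_rpow_of_exponent_ge hx hx1 (by linarith))]
  have hGg : ∀ x, 1 ≤ x → G x = g x := by
    intro x hx
    rw [hG, max_eq_left (Real.rpow_le_rpow_of_exponent_le hx (by linarith))]
  -- f is strictly monotone on (0, α₁]
  have hfmono : StrictMonoOn f (Set.Ioc 0 α₁) := by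
    apply strictMonoOn_of_deriv_pos (convex_Ioc 0 α₁)
      (G_aux_contOn _ _ (fun x hx => hx.1))
    intro x hx
    rw [interior_Ioc] at hx
    rw [(G_aux_hasDerivAt (b := b) (1 / pm) (pm / 2) hx.1).deriv]
    have hlt : x ^ (pm / 2 - 1) < b⁻¹ := by
      rw [← hα₁pow]
      exact Real.rpow_lt_rpow hx.1.le hx.2 hepos
    have h1 : (1:ℝ) / pm * (pm / 2 * x ^ (pm / 2 - 1)) = 1 / 2 * x ^ (pm / 2 - 1) := by
      field_simp
    rw [h1]
    have hinv : (1:ℝ) / (2 * b) = 1 / 2 * b⁻¹ := by rw [one_div, mul_inv]; ring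
    rw [hinv]; nlinarith
  -- f is strictly anti on [α₁, 1]
  have hfanti : StrictAntiOn f (Set.Icc α₁ 1) := by
    apply strictAntiOn_of_deriv_neg (convex_Icc α₁ 1)
      (G_aux_contOn _ _ (fun x hx => lt_of_lt_of_le hα₁pos hx.1))
    intro x hx
    rw [interior_Icc] at hx
    have hxpos : 0 < x := lt_trans hα₁pos hx.1
    rw [(G_aux_hasDerivAt (b := b) (1 / pm) (pm / 2) hxpos).deriv]
    have hlt : b⁻¹ < x ^ (pm / 2 - 1) := by
      rw [← hα₁pow]
      exact Real.rpow_lt_rpow hα₁pos.le hx.1 hepos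
    have h1 : (1:ℝ) / pm * (pm / 2 * x ^ (pm / 2 - 1)) = 1 / 2 * x ^ (pm / 2 - 1) := by
      field_simp
    rw [h1]
    have hinv : (1:ℝ) / (2 * b) = 1 / 2 * b⁻¹ := by rw [one_div, mul_inv]; ring
    rw [hinv]; nlinarith
  -- g is strictly anti on [1, ∞)
  have hganti : StrictAntiOn g (Set.Ici 1) := by
    apply strictAntiOn_of_deriv_neg (convex_Ici 1)
      (G_aux_contOn _ _ (fun x hx => lt_of_lt_of_le one_pos hx))
    intro x hx
    rw [interior_Ici] at hx
    have hxpos : (0:ℝ) < x := lt_trans one_pos hx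
    rw [(G_aux_hasDerivAt (b := b) (1 / pm) (pp / 2) hxpos).deriv]
    have hx1 : (1:ℝ) < x ^ (pp / 2 - 1) :=
      Real.one_lt_rpow_iff_of_pos hxpos |>.2 (Or.inl ⟨hx, by linarith⟩)
    have hc : (1:ℝ) / 2 ≤ 1 / pm * (pp / 2) := by
      rw [div_mul_div_comm, one_mul, div_le_div_iff₀ (by norm_num) (by positivity)]
      nlinarith
    have hinvle : (1:ℝ) / (2 * b) ≤ 1 / 2 := by
      exact one_div_le_one_div_of_le (by norm_num) (by linarith)
    have hcpos : (0:ℝ) < 1 / pm * (pp / 2) := by positivity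
    have hrw : (1:ℝ) / pm * (pp / 2 * x ^ (pp / 2 - 1))
        = (1 / pm * (pp / 2)) * x ^ (pp / 2 - 1) := by ring
    rw [hrw]; nlinarith
  constructor
  · -- strict mono on (0, α₁]
    intro x hx y hy hxy
    rw [hGf x hx.1 (le_trans hx.2 hα₁le1), hGf y (lt_trans hx.1 hxy) (le_trans hy.2 hα₁le1)]
    exact hfmono hx hy hxy
  · -- strict anti on [α₁, ∞)
    intro x hx y hy hxy
    simp only [Set.mem_Ici] at hx hy
    rcases le_or_gt y 1 with hy1 | hy1
    · have hx1 : x ≤ 1 := le_trans hxy.le hy1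
      rw [hGf x (lt_of_lt_of_le hα₁pos hx) hx1, hGf y (lt_of_lt_of_le hα₁pos hy) hy1]
      exact hfanti ⟨hx, hx1⟩ ⟨hy, hy1⟩ hxy
    · rcases le_or_gt x 1 with hx1 | hx1
      · have h2 : G 1 > G y := by
          rw [hGg 1 le_rfl, hGg y hy1.le]
          exact hganti (Set.mem_Ici.2 le_rfl) (Set.mem_Ici.2 hy1.le) hy1
        rcases eq_or_lt_of_le hx1 with heq | hx1'
        · rw [heq]; exact h2
        · have h1 : G x > G 1 := by
            rw [hGf x (lt_of_lt_of_le hα₁pos hx) hx1, hGf 1 one_pos le_rfl]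
            exact hfanti ⟨hx, hx1⟩ ⟨hα₁le1, le_rfl⟩ hx1'
          linarith
      · rw [hGg x hx1.le, hGg y (by linarith)]
        exact hganti (Set.mem_Ici.2 hx1.le) (Set.mem_Ici.2 (by linarith)) hxy
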